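/- For every ν < 0 and every real x, the Turán-type strict inequality D_{ν−1}(x)² < ((ν−1)/ν) · D_ν(x) · D_{ν−2}(x) holds. -/

import Mathlib

open MeasureTheory Real Filter

noncomputable def G (ν x : ℝ) : ℝ :=
  ∫ t in Set.Ioi (0:ℝ), t ^ (-ν - 1) * Real.exp (-t^2/2 - x*t)

noncomputable def D (ν x : ℝ) : ℝ :=
  Real.exp (-x^2/4) / Real.Gamma (-ν) * G ν x

lemma integ_aux (b x : ℝ) (hb : -1 < b) :
    IntegrableOn (fun t : ℝ => t ^ b * Real.exp (-t^2/2 - x*t)) (Set.Ioi 0) := by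
  have hg : IntegrableOn (fun t : ℝ =>
      Real.exp ((1-x)^2/2) * (Real.exp (-t) * t ^ b)) (Set.Ioi 0) := by
    have h := (Real.GammaIntegral_convergent (s := b + 1) (by linarith)).const_mul
      (Real.exp ((1-x)^2/2))
    simpa [IntegrableOn] using h
  apply hg.mono'
  · apply ContinuousOn.aestronglyMeasurable ?_ measurableSet_Ioi
    apply ContinuousOn.mul
    · exact fun t ht => (Real.continuousAt_rpow_const t b
        (Or.inl (ne_of_gt ht))).continuousWithinAt
    · exact (Real.continuous_exp.comp (by continuity)).continuousOn
  · rw [ae_restrict_iff' measurableSet_Ioi]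
    filter_upwards with t ht
    have h1 : 0 < t ^ b := Real.rpow_pos_of_pos ht b
    rw [Real.norm_eq_abs, abs_of_pos (by positivity)]
    have h2 : Real.exp (-t^2/2 - x*t) ≤ Real.exp ((1-x)^2/2) * Real.exp (-t) := by
      rw [← Real.exp_add]
      apply Real.exp_le_exp.mpr
      nlinarith [sq_nonneg (t - (1-x))]
    calc t ^ b * Real.exp (-t^2/2 - x*t)
        ≤ t ^ b * (Real.exp ((1-x)^2/2) * Real.exp (-t)) :=
          mul_le_mul_of_nonneg_left h2 h1.le
      _ = Real.exp ((1-x)^2/2) * (Real.exp (-t) * t ^ b) := by ring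

lemma pos_aux (f : ℝ → ℝ) (c : ℝ) (hint : IntegrableOn f (Set.Ioi 0))
    (hnn : ∀ t ∈ Set.Ioi (0:ℝ), 0 ≤ f t)
    (hpos : ∀ t ∈ Set.Ioi (0:ℝ), t ≠ c → 0 < f t) :
    0 < ∫ t in Set.Ioi (0:ℝ), f t := by
  rw [MeasureTheory.setIntegral_pos_iff_support_of_nonneg_ae ?_ hint]
  · refine lt_of_lt_of_le ?_ (measure_mono
      (show Set.Ioi 0 \ {c} ⊆ Function.support f ∩ Set.Ioi 0 from ?_))
    · rw [measure_diff_null (Real.volume_singleton), Real.volume_Ioi]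
      simp
    · rintro t ⟨ht, htc⟩
      exact ⟨ne_of_gt (hpos t ht htc), ht⟩
  · filter_upwards [self_mem_ae_restrict measurableSet_Ioi] with t ht using hnn t ht

theorem stmt5 (ν : ℝ) (hν : ν < 0) (x : ℝ) :
    (D (ν - 1) x) ^ 2 < ((ν - 1) / ν) * (D ν x * D (ν - 2) x) := by
  set b : ℝ := -ν - 1 with hbdef
  have hb : (-1:ℝ) < b := by rw [hbdef]; linarith
  have I0 := integ_aux b x hb
  have I1 := integ_aux (b+1) x (by linarith)
  have I2 := integ_aux (b+2) x (by linarith)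
  set E : ℝ → ℝ := fun t => Real.exp (-t^2/2 - x*t) with hE
  set H0 : ℝ := ∫ t in Set.Ioi (0:ℝ), t ^ b * E t with hH0def
  set H1 : ℝ := ∫ t in Set.Ioi (0:ℝ), t ^ (b+1) * E t with hH1def
  set H2 : ℝ := ∫ t in Set.Ioi (0:ℝ), t ^ (b+2) * E t with hH2def
  have hEpos : ∀ t, 0 < E t := fun t => Real.exp_pos _
  -- positivity of H0
  have hH0 : 0 < H0 := by
    refine pos_aux _ (-1) I0 ?_ ?_
    · intro t ht
      exact (mul_pos (Real.rpow_pos_of_pos ht b) (hEpos t)).le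
    · intro t ht _
      exact (mul_pos (Real.rpow_pos_of_pos ht b) (hEpos t))
  set c : ℝ := H1 / H0 with hcdef
  -- the quadratic integrand
  have hq_eq : Set.EqOn (fun t : ℝ => (t ^ (b+2) * E t - 2*c*(t ^ (b+1) * E t)) + c^2 * (t ^ b * E t))
      (fun t : ℝ => (t - c)^2 * (t ^ b * E t)) (Set.Ioi 0) := by
    intro t ht
    have ht' : (t:ℝ) ≠ 0 := ne_of_gt ht
    simp only
    rw [show b + 2 = (b+1)+1 by ring, Real.rpow_add_one ht', Real.rpow_add_one ht']
    ring
  have hqint : IntegrableOn (fun t : ℝ => (t - c)^2 * (t ^ b * E t)) (Set.Ioi 0) := by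
    exact IntegrableOn.congr_fun ((I2.sub (I1.const_mul (2*c))).add
      (I0.const_mul (c^2))) hq_eq measurableSet_Ioi
  have hq_pos : 0 < ∫ t in Set.Ioi (0:ℝ), (t - c)^2 * (t ^ b * E t) := by
    refine pos_aux _ c hqint ?_ ?_
    · intro t ht
      exact mul_nonneg (sq_nonneg _) (mul_pos (Real.rpow_pos_of_pos ht b) (hEpos t)).le
    · intro t ht htc
      have h1 : 0 < (t - c)^2 := by
        have : t - c ≠ 0 := sub_ne_zero.mpr htc
        positivity
      exact mul_pos h1 (mul_pos (Real.rpow_pos_of_pos ht b) (hEpos t))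
  have hq_val : (∫ t in Set.Ioi (0:ℝ), (t - c)^2 * (t ^ b * E t))
      = H2 - 2*c*H1 + c^2*H0 := by
    have h12 : IntegrableOn (fun t : ℝ => t ^ (b+2) * E t - 2*c*(t ^ (b+1) * E t))
        (Set.Ioi 0) := I2.sub (I1.const_mul (2*c))
    have h0' : IntegrableOn (fun t : ℝ => c^2 * (t ^ b * E t)) (Set.Ioi 0) :=
      I0.const_mul (c^2)
    have h1' : IntegrableOn (fun t : ℝ => 2*c*(t ^ (b+1) * E t)) (Set.Ioi 0) :=
      I1.const_mul (2*c)
    rw [← MeasureTheory.setIntegral_congr_fun measurableSet_Ioi hq_eq,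
      MeasureTheory.integral_add h12 h0', MeasureTheory.integral_sub I2 h1',
      MeasureTheory.integral_const_mul, MeasureTheory.integral_const_mul]
  have key : H1^2 < H0 * H2 := by
    rw [hq_val] at hq_pos
    have hc : c * H0 = H1 := div_mul_cancel₀ _ (ne_of_gt hH0)
    nlinarith [mul_pos hH0 hq_pos, hc, sq_nonneg (c*H0 - H1)]
  -- rewrite the G's
  have hG0 : G ν x = H0 := by rw [G, hH0def]
  have hG1 : G (ν-1) x = H1 := by
    rw [G, hH1def]
    congr 1
    rw [show (-(ν-1) - 1 : ℝ) = b + 1 by rw [hbdef]; ring]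
  have hG2 : G (ν-2) x = H2 := by
    rw [G, hH2def]
    congr 1
    rw [show (-(ν-2) - 1 : ℝ) = b + 2 by rw [hbdef]; ring]
  -- Gamma identities
  have hνne : (-ν : ℝ) ≠ 0 := by linarith
  have hΓpos : 0 < Real.Gamma (-ν) := Real.Gamma_pos_of_pos (by linarith)
  have g1 : Real.Gamma (-(ν-1)) = (-ν) * Real.Gamma (-ν) := by
    rw [show (-(ν-1) : ℝ) = -ν + 1 by ring, Real.Gamma_add_one hνne]
  have g2 : Real.Gamma (-(ν-2)) = (1-ν) * ((-ν) * Real.Gamma (-ν)) := by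
    rw [show (-(ν-2) : ℝ) = (-ν+1) + 1 by ring,
      Real.Gamma_add_one (by linarith : (-ν+1:ℝ) ≠ 0), Real.Gamma_add_one hνne]
    ring
  have hexp : (0:ℝ) < Real.exp (-x^2/4) := Real.exp_pos _
  simp only [D, hG0, hG1, hG2, g1, g2]
  have hν1 : (1-ν : ℝ) ≠ 0 := by linarith
  have hνne' : (ν : ℝ) ≠ 0 := by linarith
  have hΓne : Real.Gamma (-ν) ≠ 0 := ne_of_gt hΓpos
  have hcoef : (0:ℝ) < Real.exp (-x^2/4)^2 / (ν^2 * Real.Gamma (-ν)^2) := by positivity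
  calc (Real.exp (-x^2/4) / ((-ν) * Real.Gamma (-ν)) * H1)^2
      = Real.exp (-x^2/4)^2 / (ν^2 * Real.Gamma (-ν)^2) * H1^2 := by
        field_simp
    _ < Real.exp (-x^2/4)^2 / (ν^2 * Real.Gamma (-ν)^2) * (H0 * H2) :=
        mul_lt_mul_of_pos_left key hcoef
    _ = (ν - 1) / ν * (Real.exp (-x^2/4) / Real.Gamma (-ν) * H0 *
        (Real.exp (-x^2/4) / ((1-ν) * ((-ν) * Real.Gamma (-ν))) * H2)) := by
        field_simp
        ring
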